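/- The complement of a connected bipartite graph is vertex decomposable (its independence complex is vertex decomposable). -/

import Mathlib

open SimpleGraph

variable {V : Type*}

/-- `S` is an independent set of `G`: no two (distinct) members are adjacent. -/
def IsIndepOn (G : SimpleGraph V) (S : Set V) : Prop :=
  S.Pairwise fun u w => ¬ G.Adj u w

/-- The closed neighborhood `N_G[v]` of `v` in `G`. -/
def closedNbhd (G : SimpleGraph V) (v : V) : Set V :=
  {u | G.Adj v u} ∪ {v}

/-- Vertex decomposability of the independence complex of the induced subgraph of `G`
on the vertex set `A`. -/
inductive VertexDecomp (G : SimpleGraph V) : Set V → Prop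
  | discrete (A : Set V) (h : ∀ u ∈ A, ∀ w ∈ A, ¬ G.Adj u w) : VertexDecomp G A
  | shed (A : Set V) (v : V) (hv : v ∈ A)
      (hshed : ∀ S : Set V, S ⊆ A \ closedNbhd G v → IsIndepOn G S →
        ∃ x ∈ A, G.Adj v x ∧ IsIndepOn G (insert x S))
      (hdel : VertexDecomp G (A \ {v}))
      (hlink : VertexDecomp G (A \ closedNbhd G v)) : VertexDecomp G A

/-- `v` is a shedding vertex of `H`: every independent set avoiding `N_H[v]` can be
extended by a neighbor of `v` to an independent set of `H \ {v}`. -/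
def IsSheddingVertex (H : SimpleGraph V) (v : V) : Prop :=
  ∀ S : Set V, S ∩ closedNbhd H v = ∅ → IsIndepOn H S →
    ∃ x, H.Adj v x ∧ IsIndepOn H (insert x S)

/-- restriction of `G` to `A`, as a graph on `V`. -/
def GraphRestrict (G : SimpleGraph V) (A : Set V) : SimpleGraph V where
  Adj u w := u ∈ A ∧ w ∈ A ∧ G.Adj u w
  symm := ⟨fun u w (⟨h1, h2, h3⟩ : u ∈ A ∧ w ∈ A ∧ G.Adj u w) =>
    (⟨h2, h1, h3.symm⟩ : w ∈ A ∧ u ∈ A ∧ G.Adj w u)⟩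
  loopless := ⟨fun u (⟨_, _, h⟩ : u ∈ A ∧ u ∈ A ∧ G.Adj u u) => G.irrefl h⟩

lemma mem_diff_closedNbhd {G : SimpleGraph V} {A : Set V} {v u : V} :
    u ∈ A \ closedNbhd Gᶜ v ↔ u ∈ A ∧ G.Adj v u := by
  constructor
  · rintro ⟨hA, hn⟩
    simp only [closedNbhd, Set.mem_union, Set.mem_setOf_eq, Set.mem_singleton_iff, not_or] at hn
    obtain ⟨h1, h2⟩ := hn
    rw [compl_adj, not_and, not_not] at h1
    exact ⟨hA, h1 (fun h => h2 h.symm)⟩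
  · rintro ⟨hA, hadj⟩
    refine ⟨hA, ?_⟩
    simp only [closedNbhd, Set.mem_union, Set.mem_setOf_eq, Set.mem_singleton_iff, not_or]
    refine ⟨by rw [compl_adj]; push_neg; intro _; exact hadj, ?_⟩
    rintro rfl; exact G.irrefl hadj

lemma exists_walk_avoid {H : SimpleGraph V} {r v u : V}
    (h : H.Reachable u r) (hmax : H.dist r u ≤ H.dist r v) (hne : u ≠ v) :
    ∃ p : H.Walk u r, v ∉ p.support := by
  classical
  obtain ⟨p, hp⟩ := h.exists_walk_length_eq_dist
  refine ⟨p, fun hvs => ?_⟩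
  have hlen : (p.takeUntil v hvs).length + (p.dropUntil v hvs).length = p.length := by
    rw [← Walk.length_append, p.take_spec hvs]
  have h1 : 1 ≤ (p.takeUntil v hvs).length := by
    rcases Nat.eq_zero_or_pos (p.takeUntil v hvs).length with h0 | h1
    · exact absurd (Walk.eq_of_length_eq_zero h0) hne
    · exact h1
  have h2 : H.dist v r ≤ (p.dropUntil v hvs).length := dist_le _
  have e1 : H.dist v r = H.dist r v := dist_comm
  have e2 : H.dist u r = H.dist r u := dist_comm
  omega

lemma reachable_in_diff {G : SimpleGraph V} {A : Set V} {v u r : V}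
    (p : (GraphRestrict G A).Walk u r) (hv : v ∉ p.support) :
    (GraphRestrict G (A \ {v})).Reachable u r := by
  refine ⟨p.transfer _ ?_⟩
  intro e he
  induction e using Sym2.ind with
  | _ x y =>
    have hadj := p.adj_of_mem_edges he
    have hxs := p.fst_mem_support_of_mem_edges he
    have hys := p.snd_mem_support_of_mem_edges he
    rw [mem_edgeSet]
    refine ⟨⟨hadj.1, ?_⟩, ⟨hadj.2.1, ?_⟩, hadj.2.2⟩
    · simp only [Set.mem_singleton_iff]; rintro rfl; exact hv hxs
    · simp only [Set.mem_singleton_iff]; rintro rfl; exact hv hys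

lemma vdClique [Fintype V] {G : SimpleGraph V} :
    ∀ n (A : Set V), A.ncard ≤ n → (∀ u ∈ A, ∀ w ∈ A, ¬ G.Adj u w) →
      VertexDecomp Gᶜ A := by
  intro n
  induction n with
  | zero =>
    intro A hA _
    have hAe : A = ∅ := (Set.ncard_eq_zero (Set.toFinite A)).mp (Nat.le_zero.mp hA)
    subst hAe
    exact .discrete ∅ (by simp)
  | succ n ih =>
    intro A hA hind
    by_cases hsub : A.Subsingleton
    · exact .discrete A (fun u hu w hw hadj => ((compl_adj _ _ _).mp hadj).1 (hsub hu hw))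
    · obtain ⟨v, hv, w, hw, hvw⟩ := Set.not_subsingleton_iff.mp hsub
      have hlinkempty : A \ closedNbhd Gᶜ v = ∅ := by
        ext u
        simp only [Set.mem_empty_iff_false, iff_false]
        intro hu
        rw [mem_diff_closedNbhd] at hu
        exact hind v hv u hu.1 hu.2
      refine .shed A v hv ?_ ?_ ?_
      · intro S hS hSind
        rw [hlinkempty, Set.subset_empty_iff] at hS
        subst hS
        refine ⟨w, hw, (compl_adj _ _ _).mpr ⟨hvw, hind v hv w hw⟩, ?_⟩
        intro u hu t ht hut
        simp only [Set.mem_insert_iff, Set.mem_empty_iff_false, or_false] at hu ht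
        exact absurd (hu.trans ht.symm) hut
      · refine ih (A \ {v}) ?_ (fun u hu w hw => hind u hu.1 w hw.1)
        have := Set.ncard_diff_singleton_lt_of_mem hv (Set.toFinite A)
        omega
      · rw [hlinkempty]
        exact .discrete ∅ (by simp)

lemma vdMain [Fintype V] {G : SimpleGraph V} (V1 V2 : Set V)
    (hdisj : Disjoint V1 V2)
    (hbip : ∀ u w, G.Adj u w → (u ∈ V1 ∧ w ∈ V2) ∨ (u ∈ V2 ∧ w ∈ V1)) :
    ∀ n (A : Set V), A.ncard ≤ n →
      (∀ u ∈ A, ∀ w ∈ A, (GraphRestrict G A).Reachable u w) →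
      VertexDecomp Gᶜ A := by
  have hd : ∀ x, x ∈ V1 → x ∈ V2 → False := fun x h1 h2 => Set.disjoint_left.mp hdisj h1 h2
  have hcommon : ∀ v x y, G.Adj v x → G.Adj v y → ¬ G.Adj x y := by
    intro v x y hvx hvy hxy
    rcases hbip v x hvx with ⟨h1, h2⟩ | ⟨h1, h2⟩ <;>
      rcases hbip v y hvy with ⟨h3, h4⟩ | ⟨h3, h4⟩ <;>
        rcases hbip x y hxy with ⟨h5, h6⟩ | ⟨h5, h6⟩ <;> tauto
  intro n
  induction n with
  | zero =>
    intro A hA _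
    have hAe : A = ∅ := (Set.ncard_eq_zero (Set.toFinite A)).mp (Nat.le_zero.mp hA)
    subst hAe
    exact .discrete ∅ (by simp)
  | succ n ih =>
    intro A hcard hconnA
    by_cases hE : ∀ u ∈ A, ∀ w ∈ A, ¬ Gᶜ.Adj u w
    · exact .discrete A hE
    push_neg at hE
    obtain ⟨a, ha, b, hb, hab⟩ := hE
    have hane : a ≠ b := hab.ne
    have hfin : A.Finite := Set.toFinite A
    obtain ⟨v, hvF, hvmax⟩ := hfin.toFinset.exists_max_image
      (fun u => (GraphRestrict G A).dist a u) ⟨a, hfin.mem_toFinset.mpr ha⟩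
    rw [Set.Finite.mem_toFinset] at hvF
    have hvmax' : ∀ u ∈ A, (GraphRestrict G A).dist a u ≤ (GraphRestrict G A).dist a v :=
      fun u hu => hvmax u (hfin.mem_toFinset.mpr hu)
    have hrv : a ≠ v := by
      rintro rfl
      have h0 : (GraphRestrict G A).dist a b ≤ (GraphRestrict G A).dist a a := hvmax' b hb
      rw [SimpleGraph.dist_self] at h0
      exact hane (((hconnA a ha b hb).dist_eq_zero_iff).mp (Nat.le_zero.mp h0))
    have hkey : ∀ u ∈ A, u ≠ v → (GraphRestrict G (A \ {v})).Reachable u a := by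
      intro u hu hunv
      obtain ⟨p, hps⟩ := exists_walk_avoid (hconnA u hu a ha) (hvmax' u hu) hunv
      exact reachable_in_diff p hps
    have hconnDel : ∀ u ∈ A \ {v}, ∀ w ∈ A \ {v}, (GraphRestrict G (A \ {v})).Reachable u w := by
      intro u hu w hw
      exact (hkey u hu.1 (by simpa using hu.2)).trans (hkey w hw.1 (by simpa using hw.2)).symm
    refine .shed A v hvF ?_ ?_ ?_
    · -- shedding condition
      intro S hS hSind
      have hSnbr : ∀ s ∈ S, s ∈ A ∧ G.Adj v s := fun s hs => mem_diff_closedNbhd.mp (hS hs)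
      by_cases hSe : S = ∅
      · subst hSe
        by_cases hall : ∃ x ∈ A, x ≠ v ∧ ¬ G.Adj v x
        · obtain ⟨x, hx, hxv, hxn⟩ := hall
          refine ⟨x, hx, (compl_adj _ _ _).mpr ⟨Ne.symm hxv, hxn⟩, ?_⟩
          intro u hu t ht hut
          simp only [Set.mem_insert_iff, Set.mem_empty_iff_false, or_false] at hu ht
          exact absurd (hu.trans ht.symm) hut
        · exfalso
          push_neg at hall
          have hav : G.Adj v a := hall a ha hrv
          have hdav : (GraphRestrict G A).dist a v = 1 :=
            dist_eq_one_iff_adj.mpr ⟨ha, hvF, hav.symm⟩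
          rcases eq_or_ne b v with rfl | hbv
          · exact ((compl_adj _ _ _).mp hab).2 hav.symm
          · have hvb : G.Adj v b := hall b hb hbv
            have hdb1 : (GraphRestrict G A).dist a b = 1 :=
              le_antisymm (hdav ▸ hvmax' b hb) ((hconnA a ha b hb).pos_dist_of_ne hane)
            exact hcommon v a b hav hvb (dist_eq_one_iff_adj.mp hdb1).2.2
      · obtain ⟨s, hs⟩ := Set.nonempty_iff_ne_empty.mpr hSe
        obtain ⟨hsA, hvs⟩ := hSnbr s hs
        have hSsub : S = {s} := by
          ext t
          simp only [Set.mem_singleton_iff]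
          refine ⟨fun ht => ?_, fun h => h ▸ hs⟩
          by_contra hts
          have hnadj : ¬ Gᶜ.Adj t s := hSind ht hs hts
          rw [compl_adj, not_and, not_not] at hnadj
          exact hcommon v t s (hSnbr t ht).2 hvs (hnadj hts)
        have hexx : ∃ x ∈ A, x ≠ v ∧ G.Adj s x := by
          by_contra hno
          push_neg at hno
          rcases eq_or_ne s a with hsa | hsa
          · rcases eq_or_ne b v with rfl | hbv
            · exact ((compl_adj _ _ _).mp hab).2 (by rw [← hsa]; exact hvs.symm)
            · have hdav : (GraphRestrict G A).dist a v = 1 :=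
                dist_eq_one_iff_adj.mpr ⟨ha, hvF, by rw [← hsa]; exact hvs.symm⟩
              have hdb1 : (GraphRestrict G A).dist a b = 1 :=
                le_antisymm (hdav ▸ hvmax' b hb) ((hconnA a ha b hb).pos_dist_of_ne hane)
              exact hno b hb hbv (by rw [hsa]; exact (dist_eq_one_iff_adj.mp hdb1).2.2)
          · obtain ⟨p⟩ := hkey s hsA hvs.ne'
            cases p with
            | nil => exact hsa rfl
            | cons hadj q =>
              obtain ⟨h1, h2, h3⟩ := hadj
              exact hno _ h2.1 (by simpa using h2.2) h3
        obtain ⟨x, hxA, hxv, hsx⟩ := hexx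
        have hnvx : ¬ G.Adj v x := fun h => hcommon s x v hsx hvs.symm h.symm
        refine ⟨x, hxA, (compl_adj _ _ _).mpr ⟨Ne.symm hxv, hnvx⟩, ?_⟩
        rw [hSsub]
        intro u hu t ht hut
        simp only [Set.mem_insert_iff, Set.mem_singleton_iff] at hu ht
        rcases hu with rfl | rfl <;> rcases ht with rfl | rfl
        · exact absurd rfl hut
        · intro hc; exact ((compl_adj _ _ _).mp hc).2 hsx.symm
        · intro hc; exact ((compl_adj _ _ _).mp hc).2 hsx
        · exact absurd rfl hut
    · -- deletion
      refine ih (A \ {v}) ?_ hconnDel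
      have := Set.ncard_diff_singleton_lt_of_mem hvF hfin
      omega
    · -- link
      refine vdClique ((A \ closedNbhd Gᶜ v).ncard) _ le_rfl ?_
      intro u hu w hw
      rw [mem_diff_closedNbhd] at hu hw
      exact hcommon v u w hu.2 hw.2

theorem complement_of_connected_bipartite_vertexDecomposable {V : Type*} [Fintype V]
    (G : SimpleGraph V) (V1 V2 : Set V)
    (hunion : V1 ∪ V2 = Set.univ) (hdisj : Disjoint V1 V2)
    (hbip : ∀ u w, G.Adj u w → (u ∈ V1 ∧ w ∈ V2) ∨ (u ∈ V2 ∧ w ∈ V1))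
    (hconn : G.Connected) :
    VertexDecomp Gᶜ Set.univ := by
  have hres : GraphRestrict G Set.univ = G := by
    ext u w
    simp [GraphRestrict]
  refine vdMain V1 V2 hdisj hbip (Set.univ : Set V).ncard Set.univ le_rfl ?_
  intro u _ w _
  rw [hres]
  exact hconn.preconnected u w
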